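/- In the generalized spiked Wigner model Y = λ x xᵀ + W with ‖x‖₂ = √n, ‖x‖_∞² ≤ n^{1−ε} for some constant ε > 0, and λ√n = 1 + δ with δ = Ω(1), and with ℓ = O(log_{1+δ} n), the length-ℓ self-avoiding-walk matrix satisfies E⟨P(Y), x xᵀ⟩ = (1 ± o(1)) · λ^ℓ n^{ℓ+1} as n → ∞. -/

import Mathlib

open MeasureTheory ProbabilityTheory

noncomputable section
open scoped Classical

/-- Noise of the generalized spiked Wigner model: a symmetric random matrix whose
upper-triangular (off-diagonal) entries are independent with mean zero and variance one. -/
def IsWignerNoise {Ω : Type} [MeasurableSpace Ω] (μ : Measure Ω) (n : ℕ)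
    (W : Ω → Fin n → Fin n → ℝ) : Prop :=
  (∀ i j, Measurable fun ω => W ω i j) ∧
  (∀ ω i j, W ω i j = W ω j i) ∧
  iIndepFun
    (fun (p : {q : Fin n × Fin n // q.1 < q.2}) (ω : Ω) => W ω p.1.1 p.1.2) μ ∧
  (∀ i j : Fin n, i < j → ∫ ω, W ω i j ∂μ = 0) ∧
  (∀ i j : Fin n, i < j → ∫ ω, (W ω i j) ^ 2 ∂μ = 1)

/-- The set of length-`ℓ` self-avoiding walks from `i` to `j` in the complete graph on
`[n]`, encoded as injective functions `Fin (ℓ+1) → Fin n`. -/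
def SAWset (n ℓ : ℕ) (i j : Fin n) : Finset (Fin (ℓ + 1) → Fin n) :=
  Finset.univ.filter fun α => Function.Injective α ∧ α 0 = i ∧ α (Fin.last ℓ) = j

/-- The entry `P_{ij}(Y)` of the length-`ℓ` self-avoiding-walk matrix. -/
def sawPoly (n ℓ : ℕ) (Y : Fin n → Fin n → ℝ) (i j : Fin n) : ℝ :=
  ∑ α ∈ SAWset n ℓ i j, ∏ t : Fin ℓ, Y (α t.castSucc) (α t.succ)

lemma my_sum_biUnion_le {ι κ : Type*} [DecidableEq κ] (P : Finset ι) (B : ι → Finset κ)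
    (g : κ → ℝ) (hg : ∀ k, 0 ≤ g k) :
    ∑ k ∈ P.biUnion B, g k ≤ ∑ p ∈ P, ∑ k ∈ B p, g k := by
  classical
  induction P using Finset.induction_on with
  | empty => simp
  | @insert a s h ih =>
    rw [Finset.biUnion_insert, Finset.sum_insert h]
    calc ∑ k ∈ B a ∪ s.biUnion B, g k
        ≤ (∑ k ∈ B a, g k) + ∑ k ∈ s.biUnion B, g k := by
          have h2 : ∑ k ∈ B a ∪ s.biUnion B, g k + ∑ k ∈ B a ∩ s.biUnion B, g k
              = ∑ k ∈ B a, g k + ∑ k ∈ s.biUnion B, g k := Finset.sum_union_inter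
          have h3 : 0 ≤ ∑ k ∈ B a ∩ s.biUnion B, g k := Finset.sum_nonneg fun k _ => hg k
          linarith
      _ ≤ (∑ k ∈ B a, g k) + ∑ p ∈ s, ∑ k ∈ B p, g k := by linarith [ih]

-- product of independent integrable variables

lemma my_indep_prod {Ω : Type} [MeasurableSpace Ω] {μ : Measure Ω} [IsProbabilityMeasure μ]
    {ι : Type*} {f : ι → Ω → ℝ} (hmeas : ∀ i, Measurable (f i))
    (hint : ∀ i, Integrable (f i) μ)
    (hind : iIndepFun f μ)
    (s : Finset ι) :
    Integrable (fun ω => ∏ i ∈ s, f i ω) μ ∧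
      (∫ ω, ∏ i ∈ s, f i ω ∂μ) = ∏ i ∈ s, ∫ ω, f i ω ∂μ := by
  classical
  induction s using Finset.induction_on with
  | empty => exact ⟨by simpa using integrable_const (1:ℝ), by simp⟩
  | @insert a s h ih =>
    have hindep : IndepFun (∏ j ∈ s, f j) (f a) μ :=
      hind.indepFun_finsetProd_of_notMem hmeas h
    have hps : (∏ j ∈ s, f j) = fun ω => ∏ j ∈ s, f j ω := by
      funext ω; simp [Finset.prod_apply]
    have hint2 : Integrable ((∏ j ∈ s, f j) * f a) μ := by
      refine hindep.integrable_mul ?_ (hint a)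
      rw [hps]; exact ih.1
    have hI : (∫ ω, ((∏ j ∈ s, f j) * f a) ω ∂μ)
        = (∫ ω, (∏ j ∈ s, f j) ω ∂μ) * ∫ ω, f a ω ∂μ := by
      refine hindep.integral_mul_eq_mul_integral ?_ (hint a).aestronglyMeasurable
      rw [hps]; exact ih.1.aestronglyMeasurable
    constructor
    · have := hint2
      refine this.congr ?_
      filter_upwards with ω
      simp [Finset.prod_insert h, Finset.prod_apply, mul_comm]
    · rw [Finset.prod_insert h]
      have e1 : (fun ω => ∏ i ∈ insert a s, f i ω) = fun ω => ((∏ j ∈ s, f j) * f a) ω := by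
        funext ω; simp [Finset.prod_insert h, Finset.prod_apply, mul_comm]
      rw [e1, hI, hps] at *
      rw [ih.2]; ring

lemma my_constr (n ℓ : ℕ) (c : Fin n → ℝ) (hc : ∀ i, 0 ≤ c i) (M : ℝ) (hM0 : 0 ≤ M)
    (hM : ∀ i, c i ≤ M) (hsum : ∑ i, c i = (n : ℝ)) (s t : Fin (ℓ + 1)) (hst : s ≠ t) :
    ∑ α ∈ Finset.univ.filter (fun α : Fin (ℓ + 1) → Fin n => α s = α t), ∏ u, c (α u)
      ≤ M * (n : ℝ) ^ ℓ := by
  classical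
  have key : ∑ α ∈ Finset.univ.filter (fun α : Fin (ℓ + 1) → Fin n => α s = α t),
      ∏ u ∈ Finset.univ.erase t, c (α u) = (n : ℝ) ^ ℓ := by
    have hbij : ∑ α ∈ Finset.univ.filter (fun α : Fin (ℓ + 1) → Fin n => α s = α t),
        ∏ u ∈ Finset.univ.erase t, c (α u)
        = ∑ h : {u : Fin (ℓ + 1) // u ≠ t} → Fin n, ∏ u : {u : Fin (ℓ + 1) // u ≠ t}, c (h u) := by
      refine Finset.sum_nbij' (fun α => fun u => α u.1)
        (fun h => fun u => if hu : u = t then h ⟨s, hst⟩ else h ⟨u, hu⟩) ?_ ?_ ?_ ?_ ?_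
      · intro α hα; exact Finset.mem_univ _
      · intro h hh
        simp only [Finset.mem_filter, Finset.mem_univ, true_and]
        simp [hst]
      · intro α hα
        simp only [Finset.mem_filter, Finset.mem_univ, true_and] at hα
        funext u
        by_cases hu : u = t
        · simp [hu, ← hα]
        · simp [hu]
      · intro h hh
        funext u
        simp [u.2]
      · intro α hα
        rw [Finset.prod_subtype (Finset.univ.erase t) (p := fun u => u ≠ t)]
        intro u; simp [Finset.mem_erase]
    rw [hbij]
    have := Finset.prod_univ_sum (fun _ : {u : Fin (ℓ + 1) // u ≠ t} => (Finset.univ : Finset (Fin n)))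
      (fun _ i => c i)
    rw [Fintype.piFinset_univ] at this
    rw [← this, Finset.prod_const, hsum]
    congr 1
    simp [Fintype.card_subtype_compl, Fintype.card_subtype_eq]
  calc ∑ α ∈ Finset.univ.filter (fun α : Fin (ℓ + 1) → Fin n => α s = α t), ∏ u, c (α u)
      ≤ ∑ α ∈ Finset.univ.filter (fun α : Fin (ℓ + 1) → Fin n => α s = α t),
          M * ∏ u ∈ Finset.univ.erase t, c (α u) := by
        refine Finset.sum_le_sum fun α hα => ?_
        rw [← Finset.mul_prod_erase Finset.univ (fun u => c (α u)) (Finset.mem_univ t)]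
        exact mul_le_mul_of_nonneg_right (hM _)
          (Finset.prod_nonneg fun u _ => hc _)
    _ = M * (n : ℝ) ^ ℓ := by rw [← Finset.mul_sum, key]

lemma my_comb (n ℓ : ℕ) (c : Fin n → ℝ) (hc : ∀ i, 0 ≤ c i) (M : ℝ) (hM0 : 0 ≤ M)
    (hM : ∀ i, c i ≤ M) (hsum : ∑ i, c i = (n : ℝ)) :
    |(∑ α ∈ Finset.univ.filter (fun α : Fin (ℓ + 1) → Fin n => Function.Injective α),
        ∏ u, c (α u)) - (n : ℝ) ^ (ℓ + 1)|
      ≤ ((ℓ + 1) : ℝ) ^ 2 * M * (n : ℝ) ^ ℓ := by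
  classical
  set S := ∑ α ∈ Finset.univ.filter (fun α : Fin (ℓ + 1) → Fin n => Function.Injective α),
      ∏ u, c (α u) with hS
  have hT : ∑ α : Fin (ℓ + 1) → Fin n, ∏ u, c (α u) = (n : ℝ) ^ (ℓ + 1) := by
    have := Finset.prod_univ_sum (fun _ : Fin (ℓ + 1) => (Finset.univ : Finset (Fin n)))
      (fun _ i => c i)
    rw [Fintype.piFinset_univ] at this
    rw [← this, Finset.prod_const, hsum]
    simp
  have hsplit : S + ∑ α ∈ Finset.univ.filter
      (fun α : Fin (ℓ + 1) → Fin n => ¬ Function.Injective α), ∏ u, c (α u)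
      = (n : ℝ) ^ (ℓ + 1) := by
    rw [hS, Finset.sum_filter_add_sum_filter_not, hT]
  have hNn : 0 ≤ ∑ α ∈ Finset.univ.filter
      (fun α : Fin (ℓ + 1) → Fin n => ¬ Function.Injective α), ∏ u, c (α u) :=
    Finset.sum_nonneg fun α _ => Finset.prod_nonneg fun u _ => hc _
  have hcover : Finset.univ.filter (fun α : Fin (ℓ + 1) → Fin n => ¬ Function.Injective α)
      ⊆ (Finset.univ : Finset (Fin (ℓ + 1))).offDiag.biUnion
        (fun p => Finset.univ.filter (fun α : Fin (ℓ + 1) → Fin n => α p.1 = α p.2)) := by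
    intro α hα
    have hα := (Finset.mem_filter.1 hα).2
    simp only [Function.Injective] at hα
    push_neg at hα
    obtain ⟨a, b, hab, hne⟩ := hα
    refine Finset.mem_biUnion.2 ⟨(a, b), ?_, ?_⟩
    · simp [Finset.mem_offDiag, hne]
    · simp [hab]
  have hNbound : ∑ α ∈ Finset.univ.filter
      (fun α : Fin (ℓ + 1) → Fin n => ¬ Function.Injective α), ∏ u, c (α u)
      ≤ ((ℓ + 1) : ℝ) ^ 2 * M * (n : ℝ) ^ ℓ := by
    calc ∑ α ∈ (Finset.univ.filter
          (fun α : Fin (ℓ + 1) → Fin n => ¬ Function.Injective α)), ∏ u, c (α u)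
        ≤ ∑ α ∈ ((Finset.univ : Finset (Fin (ℓ + 1))).offDiag.biUnion
            (fun p => Finset.univ.filter (fun α : Fin (ℓ + 1) → Fin n => α p.1 = α p.2))),
            ∏ u, c (α u) := by
          exact Finset.sum_le_sum_of_subset_of_nonneg hcover
            (fun α _ _ => Finset.prod_nonneg fun u _ => hc _)
      _ ≤ ∑ p ∈ (Finset.univ : Finset (Fin (ℓ + 1))).offDiag,
            ∑ α ∈ Finset.univ.filter (fun α : Fin (ℓ + 1) → Fin n => α p.1 = α p.2),
            ∏ u, c (α u) := by
          exact my_sum_biUnion_le _ _ _ (fun α => Finset.prod_nonneg fun u _ => hc _)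
      _ ≤ ∑ p ∈ (Finset.univ : Finset (Fin (ℓ + 1))).offDiag, M * (n : ℝ) ^ ℓ := by
          refine Finset.sum_le_sum fun p hp => ?_
          rw [Finset.mem_offDiag] at hp
          exact my_constr n ℓ c hc M hM0 hM hsum p.1 p.2 hp.2.2
      _ ≤ ((ℓ + 1) : ℝ) ^ 2 * M * (n : ℝ) ^ ℓ := by
          rw [Finset.sum_const, nsmul_eq_mul]
          have hcard : ((Finset.univ : Finset (Fin (ℓ + 1))).offDiag.card : ℝ)
              ≤ ((ℓ + 1) : ℝ) ^ 2 := by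
            have := Finset.offDiag_card (Finset.univ : Finset (Fin (ℓ + 1)))
            rw [Finset.card_univ, Fintype.card_fin] at this
            rw [this]
            push_cast [Nat.cast_sub (by nlinarith : ℓ + 1 ≤ (ℓ+1)*(ℓ+1))]
            nlinarith [Nat.cast_nonneg (α := ℝ) ℓ]
          exact mul_le_mul_of_nonneg_right hcard
            (mul_nonneg hM0 (pow_nonneg (Nat.cast_nonneg n) _))
            |>.trans_eq (by ring) |>.trans_eq rfl
  rw [abs_sub_comm, abs_of_nonneg (by linarith)]
  linarith

lemma my_collapse (n ℓ : ℕ) (g : (Fin (ℓ + 1) → Fin n) → ℝ) :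
    ∑ i, ∑ j, ∑ α ∈ SAWset n ℓ i j, g α
      = ∑ α ∈ Finset.univ.filter (fun α : Fin (ℓ + 1) → Fin n => Function.Injective α), g α := by
  classical
  rw [← Finset.sum_fiberwise_of_maps_to (g := fun α : Fin (ℓ+1) → Fin n => α 0)
    (t := Finset.univ) (fun α _ => Finset.mem_univ _) g]
  refine Finset.sum_congr rfl fun i _ => ?_
  rw [← Finset.sum_fiberwise_of_maps_to (g := fun α : Fin (ℓ+1) → Fin n => α (Fin.last ℓ))
    (t := Finset.univ) (fun α _ => Finset.mem_univ _) g]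
  refine Finset.sum_congr rfl fun j _ => ?_
  refine Finset.sum_congr ?_ fun _ _ => rfl
  ext α
  simp only [SAWset, Finset.mem_filter, Finset.mem_univ, true_and]
  tauto

lemma my_walk (n ℓ : ℕ) (x : Fin n → ℝ) (lam : ℝ)
    (Ω : Type) [MeasurableSpace Ω] (μ : Measure Ω) [IsProbabilityMeasure μ]
    (W : Ω → Fin n → Fin n → ℝ) (hW : IsWignerNoise μ n W)
    (α : Fin (ℓ + 1) → Fin n) (hα : Function.Injective α) :
    Integrable (fun ω => ∏ t : Fin ℓ,
        (lam * x (α t.castSucc) * x (α t.succ) + W ω (α t.castSucc) (α t.succ))) μ ∧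
      (∫ ω, ∏ t : Fin ℓ,
        (lam * x (α t.castSucc) * x (α t.succ) + W ω (α t.castSucc) (α t.succ)) ∂μ)
        = ∏ t : Fin ℓ, (lam * x (α t.castSucc) * x (α t.succ)) := by
  classical
  obtain ⟨hmeasW, hsymm, hind, hmean, hvar⟩ := hW
  set f : {q : Fin n × Fin n // q.1 < q.2} → Ω → ℝ :=
    fun p ω => lam * x p.1.1 * x p.1.2 + W ω p.1.1 p.1.2 with hf
  have hfmeas : ∀ p, Measurable (f p) := fun p => measurable_const.add (hmeasW _ _)
  have hZint : ∀ p : {q : Fin n × Fin n // q.1 < q.2},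
      Integrable (fun ω => W ω p.1.1 p.1.2) μ := by
    intro p
    have hv := hvar p.1.1 p.1.2 p.2
    have h2 : Integrable (fun ω => (W ω p.1.1 p.1.2) ^ 2) μ := by
      by_contra h; rw [integral_undef h] at hv; norm_num at hv
    refine ((integrable_const (1 : ℝ)).add h2).mono'
      ((hmeasW _ _).aestronglyMeasurable) ?_
    filter_upwards with ω
    rw [Real.norm_eq_abs]
    simp only [Pi.add_apply]
    nlinarith [sq_nonneg (|W ω p.1.1 p.1.2| - 1), sq_abs (W ω p.1.1 p.1.2)]
  have hfint : ∀ p, Integrable (f p) μ := fun p => (integrable_const _).add (hZint p)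
  have hfI : ∀ p, (∫ ω, f p ω ∂μ) = lam * x p.1.1 * x p.1.2 := by
    intro p
    rw [hf]
    simp only
    rw [integral_add (integrable_const _) (hZint p), integral_const, hmean _ _ p.2]
    simp
  have hindf : iIndepFun f μ := by
    have := hind.comp (fun p (z : ℝ) => lam * x p.1.1 * x p.1.2 + z)
      (fun p => measurable_id.const_add _)
    exact this
  -- edge map
  have hne : ∀ t : Fin ℓ, α t.castSucc ≠ α t.succ := by
    intro t hEq
    have h1 := hα hEq
    have := congrArg Fin.val h1
    simp [Fin.val_succ] at this
  set e : Fin ℓ → {q : Fin n × Fin n // q.1 < q.2} := fun t =>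
    if h : α t.castSucc < α t.succ then ⟨(α t.castSucc, α t.succ), h⟩
    else ⟨(α t.succ, α t.castSucc), lt_of_le_of_ne (not_lt.1 h) (hne t).symm⟩ with he
  have hfe : ∀ t ω, f (e t) ω
      = lam * x (α t.castSucc) * x (α t.succ) + W ω (α t.castSucc) (α t.succ) := by
    intro t ω
    by_cases h : α t.castSucc < α t.succ
    · simp [he, hf, h]
    · simp only [he, hf, dif_neg h]
      rw [hsymm ω]
      ring
  have hce : ∀ t, lam * x (e t).1.1 * x (e t).1.2
      = lam * x (α t.castSucc) * x (α t.succ) := by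
    intro t
    by_cases h : α t.castSucc < α t.succ
    · simp [he, h]
    · simp only [he, dif_neg h]; ring
  have heinj : Function.Injective e := by
    intro s t hst
    simp only [he] at hst
    have hkey : (α s.castSucc = α t.castSucc ∧ α s.succ = α t.succ)
        ∨ (α s.castSucc = α t.succ ∧ α s.succ = α t.castSucc) := by
      by_cases hs : α s.castSucc < α s.succ <;> by_cases ht : α t.castSucc < α t.succ
      · rw [dif_pos hs, dif_pos ht] at hst
        have hv := congrArg Subtype.val hst
        exact Or.inl ⟨congrArg Prod.fst hv, congrArg Prod.snd hv⟩
      · rw [dif_pos hs, dif_neg ht] at hst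
        have hv := congrArg Subtype.val hst
        exact Or.inr ⟨congrArg Prod.fst hv, congrArg Prod.snd hv⟩
      · rw [dif_neg hs, dif_pos ht] at hst
        have hv := congrArg Subtype.val hst
        exact Or.inr ⟨(congrArg Prod.snd hv), (congrArg Prod.fst hv)⟩
      · rw [dif_neg hs, dif_neg ht] at hst
        have hv := congrArg Subtype.val hst
        exact Or.inl ⟨congrArg Prod.snd hv, congrArg Prod.fst hv⟩
    rcases hkey with ⟨h1, h2⟩ | ⟨h1, h2⟩
    · have e1 := congrArg Fin.val (hα h1)
      simp only [Fin.coe_castSucc] at e1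
      exact Fin.val_injective e1
    · have e1 := congrArg Fin.val (hα h1)
      have e2 := congrArg Fin.val (hα h2)
      simp only [Fin.coe_castSucc, Fin.val_succ] at e1 e2
      exact absurd rfl (by omega : s.val ≠ s.val) 
  have hprod : ∀ ω, (∏ t : Fin ℓ,
      (lam * x (α t.castSucc) * x (α t.succ) + W ω (α t.castSucc) (α t.succ)))
      = ∏ p ∈ Finset.univ.image e, f p ω := by
    intro ω
    rw [Finset.prod_image (fun a _ b _ h => heinj h)]
    exact Finset.prod_congr rfl fun t _ => (hfe t ω).symm
  obtain ⟨hint1, hieq⟩ := my_indep_prod hfmeas hfint hindf (Finset.univ.image e)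
  constructor
  · exact hint1.congr (Filter.Eventually.of_forall fun ω => (hprod ω).symm)
  · calc (∫ ω, ∏ t : Fin ℓ,
        (lam * x (α t.castSucc) * x (α t.succ) + W ω (α t.castSucc) (α t.succ)) ∂μ)
        = ∫ ω, ∏ p ∈ Finset.univ.image e, f p ω ∂μ := by
          exact integral_congr_ae (Filter.Eventually.of_forall hprod)
      _ = ∏ p ∈ Finset.univ.image e, ∫ ω, f p ω ∂μ := hieq
      _ = ∏ t : Fin ℓ, ∫ ω, f (e t) ω ∂μ :=
          Finset.prod_image (fun a _ b _ h => heinj h)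
      _ = ∏ t : Fin ℓ, (lam * x (α t.castSucc) * x (α t.succ)) := by
          refine Finset.prod_congr rfl fun t _ => ?_
          rw [hfI (e t), hce t]

set_option maxHeartbeats 1000000 in
theorem stmt_7 (ε δ₀ K : ℝ) (hε : 0 < ε) (hδ₀ : 0 < δ₀) (hK : 0 < K) :
    ∀ ε' : ℝ, 0 < ε' → ∃ N : ℕ, ∀ n : ℕ, N ≤ n →
    ∀ (x : Fin n → ℝ) (lam δ : ℝ) (ℓ : ℕ),
      (∑ i, (x i) ^ 2) = (n : ℝ) →
      ‖x‖ ^ 2 ≤ (n : ℝ) ^ ((1 : ℝ) - ε) →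
      lam * Real.sqrt n = 1 + δ → δ₀ ≤ δ →
      (ℓ : ℝ) ≤ K * Real.logb (1 + δ) n →
    ∀ (Ω : Type) (_ : MeasurableSpace Ω) (μ : Measure Ω), IsProbabilityMeasure μ →
    ∀ W : Ω → Fin n → Fin n → ℝ, IsWignerNoise μ n W →
      |(∫ ω, ∑ i, ∑ j,
          sawPoly n ℓ (fun a b => lam * x a * x b + W ω a b) i j * (x i * x j) ∂μ) -
            lam ^ ℓ * (n : ℝ) ^ (ℓ + 1)| ≤
        ε' * (lam ^ ℓ * (n : ℝ) ^ (ℓ + 1)) := by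
  intro ε' hε'
  have hc : 0 < Real.log (1 + δ₀) := Real.log_pos (by linarith)
  set D : ℝ := K / Real.log (1 + δ₀) + 1 with hD
  have hD0 : 0 < D := by positivity
  have hlog2 : (fun y : ℝ => Real.log y ^ (2 : ℝ)) =o[Filter.atTop] fun y => y ^ ε :=
    isLittleO_log_rpow_rpow_atTop 2 hε
  have hev1 := hlog2.def (show (0 : ℝ) < ε' / D ^ 2 by positivity)
  have hev2 : ∀ᶠ y : ℝ in Filter.atTop, 1 ≤ Real.log y :=
    Real.tendsto_log_atTop.eventually_ge_atTop 1
  have hev3 : ∀ᶠ y : ℝ in Filter.atTop, (1 : ℝ) ≤ y := Filter.eventually_ge_atTop 1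
  have hev : ∀ᶠ y : ℝ in Filter.atTop,
      (K / Real.log (1 + δ₀) * Real.log y + 1) ^ 2 ≤ ε' * y ^ ε := by
    filter_upwards [hev1, hev2, hev3] with y h1 h2 h3
    have hly : (0 : ℝ) ≤ Real.log y := by linarith
    have hKc : (0 : ℝ) ≤ K / Real.log (1 + δ₀) := by positivity
    rw [Real.norm_eq_abs, Real.norm_eq_abs, Real.rpow_two,
      abs_of_nonneg (by positivity : (0 : ℝ) ≤ Real.log y ^ 2),
      abs_of_nonneg (Real.rpow_nonneg (by linarith) _)] at h1
    have hLL : Real.log y ≤ Real.log y ^ 2 := by nlinarith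
    have hsq : (K / Real.log (1 + δ₀) * Real.log y + 1) ^ 2
        ≤ D ^ 2 * Real.log y ^ 2 := by
      rw [hD]
      nlinarith [mul_le_mul_of_nonneg_left hLL hKc, hLL]
    have h4 : D ^ 2 * Real.log y ^ 2 ≤ D ^ 2 * (ε' / D ^ 2 * y ^ ε) := by nlinarith
    have h5 : D ^ 2 * (ε' / D ^ 2 * y ^ ε) = ε' * y ^ ε := by field_simp
    linarith
  obtain ⟨y₀, hy₀⟩ := Filter.eventually_atTop.1 hev
  refine ⟨max 1 ⌈y₀⌉₊, ?_⟩
  intro n hn x lam δ ℓ hxsum hxinf hlamn hδ hℓ Ω mΩ μ hμ W hW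
  haveI := hμ
  have hn1 : 1 ≤ n := le_trans (le_max_left _ _) hn
  have hnR : (1 : ℝ) ≤ (n : ℝ) := by exact_mod_cast hn1
  have hnpos : (0 : ℝ) < (n : ℝ) := by linarith
  have hyn : y₀ ≤ (n : ℝ) := le_trans (Nat.le_ceil y₀)
    (by exact_mod_cast le_trans (le_max_right _ _) hn)
  have hkey := hy₀ (n : ℝ) hyn
  have hδ1 : (0 : ℝ) < 1 + δ := by linarith
  have hsqn : 0 < Real.sqrt n := Real.sqrt_pos.2 hnpos
  have hlam : 0 < lam := by nlinarith
  set M : ℝ := (n : ℝ) ^ ((1 : ℝ) - ε) with hMdef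
  have hM0 : (0 : ℝ) ≤ M := Real.rpow_nonneg hnpos.le _
  have hMb : ∀ i, (x i) ^ 2 ≤ M := by
    intro i
    have h1 : ‖x i‖ ≤ ‖x‖ := norm_le_pi_norm x i
    have h2 : (x i) ^ 2 ≤ ‖x‖ ^ 2 := by
      rw [show (x i) ^ 2 = ‖x i‖ ^ 2 by rw [Real.norm_eq_abs, sq_abs]]
      exact pow_le_pow_left₀ (norm_nonneg _) h1 2
    linarith [hxinf]
  -- the expectation identity
  have hE : (∫ ω, ∑ i, ∑ j,
      sawPoly n ℓ (fun a b => lam * x a * x b + W ω a b) i j * (x i * x j) ∂μ)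
      = lam ^ ℓ * ∑ α ∈ Finset.univ.filter
          (fun α : Fin (ℓ + 1) → Fin n => Function.Injective α), ∏ u, (x (α u)) ^ 2 := by
    have hpt : ∀ ω, (∑ i, ∑ j,
        sawPoly n ℓ (fun a b => lam * x a * x b + W ω a b) i j * (x i * x j))
        = ∑ α ∈ Finset.univ.filter
            (fun α : Fin (ℓ + 1) → Fin n => Function.Injective α),
            (∏ t : Fin ℓ, (lam * x (α t.castSucc) * x (α t.succ)
              + W ω (α t.castSucc) (α t.succ))) * (x (α 0) * x (α (Fin.last ℓ))) := by
      intro ω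
      rw [← my_collapse n ℓ]
      refine Finset.sum_congr rfl fun i _ => Finset.sum_congr rfl fun j _ => ?_
      rw [sawPoly, Finset.sum_mul]
      refine Finset.sum_congr rfl fun α hα => ?_
      simp only [SAWset, Finset.mem_filter] at hα
      rw [hα.2.2.1, hα.2.2.2]
    rw [integral_congr_ae (Filter.Eventually.of_forall hpt)]
    rw [integral_finset_sum _ (fun α hα => by
      refine ((my_walk n ℓ x lam Ω μ W hW α ?_).1).mul_const _
      exact (Finset.mem_filter.1 hα).2)]
    rw [Finset.mul_sum]
    refine Finset.sum_congr rfl fun α hα => ?_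
    have hαi : Function.Injective α := (Finset.mem_filter.1 hα).2
    rw [integral_mul_const, (my_walk n ℓ x lam Ω μ W hW α hαi).2]
    -- algebra
    have e1 : ∏ t : Fin ℓ, (lam * x (α t.castSucc) * x (α t.succ))
        = lam ^ ℓ * ((∏ t : Fin ℓ, x (α t.castSucc)) * (∏ t : Fin ℓ, x (α t.succ))) := by
      rw [Finset.prod_mul_distrib, Finset.prod_mul_distrib, Finset.prod_const]
      simp [mul_assoc]
    have e2 : (∏ u : Fin (ℓ + 1), x (α u))
        = (∏ t : Fin ℓ, x (α t.castSucc)) * x (α (Fin.last ℓ)) :=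
      Fin.prod_univ_castSucc (f := fun u => x (α u))
    have e3 : (∏ u : Fin (ℓ + 1), x (α u)) = x (α 0) * ∏ t : Fin ℓ, x (α t.succ) :=
      Fin.prod_univ_succ (f := fun u => x (α u))
    have e4 : ∏ u : Fin (ℓ + 1), (x (α u)) ^ 2 = (∏ u : Fin (ℓ + 1), x (α u)) ^ 2 :=
      Finset.prod_pow _ _ _
    have e5 : (∏ u : Fin (ℓ + 1), x (α u)) ^ 2
        = ((∏ t : Fin ℓ, x (α t.castSucc)) * x (α (Fin.last ℓ)))
          * (x (α 0) * ∏ t : Fin ℓ, x (α t.succ)) := by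
      rw [sq]
      nth_rewrite 1 [e2]
      nth_rewrite 1 [e3]
      rfl
    rw [e1, e4, e5]
    ring
  rw [hE]
  have hcomb := my_comb n ℓ (fun i => (x i) ^ 2) (fun i => sq_nonneg _) M hM0 hMb hxsum
  set S := ∑ α ∈ Finset.univ.filter
      (fun α : Fin (ℓ + 1) → Fin n => Function.Injective α), ∏ u, (x (α u)) ^ 2 with hSdef
  have hlp : (0 : ℝ) ≤ lam ^ ℓ := pow_nonneg hlam.le _
  have habs : |lam ^ ℓ * S - lam ^ ℓ * (n : ℝ) ^ (ℓ + 1)|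
      = lam ^ ℓ * |S - (n : ℝ) ^ (ℓ + 1)| := by
    rw [← mul_sub, abs_mul, abs_of_nonneg hlp]
  rw [habs]
  -- key numeric inequality
  have hstep1 : ((ℓ : ℝ) + 1) ≤ K / Real.log (1 + δ₀) * Real.log n + 1 := by
    have hlogn : (0 : ℝ) ≤ Real.log n := Real.log_nonneg hnR
    have hlb : Real.log (1 + δ₀) ≤ Real.log (1 + δ) :=
      Real.log_le_log (by linarith) (by linarith)
    have hdiv : Real.log n / Real.log (1 + δ) ≤ Real.log n / Real.log (1 + δ₀) :=
      div_le_div_of_nonneg_left hlogn hc hlb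
    have h6 : (ℓ : ℝ) ≤ K * (Real.log n / Real.log (1 + δ₀)) := by
      rw [Real.logb] at hℓ
      nlinarith
    have heq : K * (Real.log n / Real.log (1 + δ₀))
        = K / Real.log (1 + δ₀) * Real.log n := by ring
    linarith [heq ▸ h6]
  have hstep2 : ((ℓ : ℝ) + 1) ^ 2 ≤ ε' * (n : ℝ) ^ ε := by
    have h0 : (0 : ℝ) ≤ (ℓ : ℝ) + 1 := by positivity
    nlinarith [hkey, hstep1]
  have hrw : (n : ℝ) ^ ε * M = (n : ℝ) := by
    rw [hMdef, ← Real.rpow_add hnpos]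
    norm_num
  have hkey2 : ((ℓ : ℝ) + 1) ^ 2 * M * (n : ℝ) ^ ℓ ≤ ε' * (n : ℝ) ^ (ℓ + 1) := by
    have hpl : (0 : ℝ) ≤ (n : ℝ) ^ ℓ := pow_nonneg hnpos.le _
    have h1 : ((ℓ : ℝ) + 1) ^ 2 * M ≤ ε' * (n : ℝ) ^ ε * M :=
      mul_le_mul_of_nonneg_right hstep2 hM0
    have h2 : ε' * (n : ℝ) ^ ε * M = ε' * (n : ℝ) := by
      rw [mul_assoc, hrw]
    have h3 : ((ℓ : ℝ) + 1) ^ 2 * M * (n : ℝ) ^ ℓ ≤ ε' * (n : ℝ) * (n : ℝ) ^ ℓ := by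
      nlinarith
    calc ((ℓ : ℝ) + 1) ^ 2 * M * (n : ℝ) ^ ℓ ≤ ε' * (n : ℝ) * (n : ℝ) ^ ℓ := h3
      _ = ε' * (n : ℝ) ^ (ℓ + 1) := by ring
  calc lam ^ ℓ * |S - (n : ℝ) ^ (ℓ + 1)|
      ≤ lam ^ ℓ * (((ℓ : ℝ) + 1) ^ 2 * M * (n : ℝ) ^ ℓ) := by
        exact mul_le_mul_of_nonneg_left hcomb hlp
    _ ≤ lam ^ ℓ * (ε' * (n : ℝ) ^ (ℓ + 1)) := mul_le_mul_of_nonneg_left hkey2 hlp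
    _ = ε' * (lam ^ ℓ * (n : ℝ) ^ (ℓ + 1)) := by ring

end
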